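/- Let G be a closed subgroup of GL(n,ℝ) and 𝔤 = {A ∈ M_n(ℝ) : exp(tA) ∈ G for all t ∈ ℝ} its Lie algebra. If X: ℝ → M_n(ℝ) is continuous with X(s) ∈ 𝔤 for all s, then the holonomy stays in the group: hol_X(s) ∈ G for all s ∈ ℝ. -/

import Mathlib

set_option maxHeartbeats 1000000
set_option maxHeartbeats 1000000

open NormedSpace Nat Set

section Aux
variable {𝔸 : Type*} [NormedRing 𝔸] [NormedAlgebra ℝ 𝔸] [CompleteSpace 𝔸] [NormOneClass 𝔸]

noncomputable instance instNormedAlgebraRatAux : NormedAlgebra ℚ 𝔸 :=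
  NormedAlgebra.restrictScalars ℚ ℝ 𝔸

lemma my_norm_exp_le (x : 𝔸) : ‖exp x‖ ≤ Real.exp ‖x‖ := by
  have h1 := NormedSpace.exp_series_hasSum_exp' (𝕂 := ℝ) x
  have h2 : HasSum (fun k : ℕ => (k !⁻¹ : ℝ) • ‖x‖ ^ k) (Real.exp ‖x‖) := by
    rw [Real.exp_eq_exp_ℝ]
    exact NormedSpace.exp_series_hasSum_exp' (𝕂 := ℝ) ‖x‖
  refine h1.norm_le_of_bounded h2 fun k => ?_
  rw [norm_smul, smul_eq_mul, Real.norm_eq_abs, abs_of_nonneg (by positivity)]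
  gcongr
  exact norm_pow_le x k

omit [NormOneClass 𝔸] in
lemma my_exp_mul_exp_neg (x : 𝔸) : exp x * exp (-x) = 1 := by
  rw [← NormedSpace.exp_add_of_commute (Commute.neg_right (Commute.refl x)), add_neg_cancel,
    NormedSpace.exp_zero]

lemma key_approx (G : Subgroup 𝔸ˣ)
    (X : ℝ → 𝔸) (hX : Continuous X)
    (hmem : ∀ a t : ℝ, ∃ u : 𝔸ˣ, u ∈ G ∧ (u : 𝔸) = exp (t • X a))
    (hol : ℝ → 𝔸) (hhol : ∀ a, HasDerivAt hol (X a * hol a) a) (hhol0 : hol 0 = 1)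
    {s : ℝ} (hs : 0 ≤ s) {C : ℝ} (hC : 1 ≤ C) (hCX : ∀ a ∈ Icc 0 s, ‖X a‖ ≤ C)
    {ε : ℝ} (hε : 0 < ε) :
    ∃ u : 𝔸ˣ, u ∈ G ∧ ‖(u : 𝔸) - hol s‖ ≤ ε ∧ ‖((u⁻¹ : 𝔸ˣ) : 𝔸)‖ ≤ Real.exp (C * s) := by
  have hC0 : (0:ℝ) < C := lt_of_lt_of_le one_pos hC
  set D : ℝ := s * (Real.exp (C * s) * Real.exp (C * s)) with hD
  have hD0 : 0 ≤ D := by positivity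
  set ε' : ℝ := ε / (D + 1) with hε'def
  have hε'0 : 0 < ε' := by positivity
  -- uniform continuity
  have hUC : UniformContinuousOn X (Icc 0 s) :=
    (isCompact_Icc).uniformContinuousOn_of_continuous hX.continuousOn
  rw [Metric.uniformContinuousOn_iff] at hUC
  obtain ⟨δ, hδ0, hδ⟩ := hUC ε' hε'0
  -- choose N
  obtain ⟨N, hN⟩ := exists_nat_gt (s / δ)
  have hN0 : 0 < (N:ℝ) := lt_of_le_of_lt (by positivity) hN
  have hNnat : 0 < N := by exact_mod_cast hN0
  set Δ : ℝ := s / N with hΔdef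
  have hΔ0 : 0 ≤ Δ := by positivity
  have hΔδ : Δ < δ := by
    rw [hΔdef, div_lt_iff₀ hN0]
    calc s = (s / δ) * δ := by field_simp
    _ < N * δ := by gcongr
    _ = δ * N := by ring
  have hNΔ : (N:ℝ) * Δ = s := by
    rw [hΔdef]; field_simp
  -- the approximating units
  have hv := fun k : ℕ => (hmem ((k:ℝ) * Δ) Δ).choose_spec
  set v : ℕ → 𝔸ˣ := fun k => (hmem ((k:ℝ) * Δ) Δ).choose with hvdef
  set u : ℕ → 𝔸ˣ := fun k => Nat.rec 1 (fun k uk => v k * uk) k with hudef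
  have hu0 : u 0 = 1 := rfl
  have huS : ∀ k, u (k + 1) = v k * u k := fun k => rfl
  have huG : ∀ k, u k ∈ G := by
    intro k; induction k with
    | zero => exact G.one_mem
    | succ k ih => exact G.mul_mem (hv k).1 ih
  -- norm bounds on v
  have hkΔs : ∀ k : ℕ, k ≤ N → (k:ℝ) * Δ ≤ s := by
    intro k hk
    calc (k:ℝ) * Δ ≤ (N:ℝ) * Δ := by gcongr
    _ = s := hNΔ
  have hvnorm : ∀ k : ℕ, k < N → ‖(v k : 𝔸)‖ ≤ Real.exp (C * Δ) := by
    intro k hk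
    rw [(hv k).2]
    refine (my_norm_exp_le _).trans (Real.exp_le_exp.2 ?_)
    rw [norm_smul, Real.norm_eq_abs, abs_of_nonneg hΔ0]
    calc Δ * ‖X ((k:ℝ) * Δ)‖ ≤ Δ * C := by
          gcongr
          exact hCX _ ⟨by positivity, hkΔs k hk.le⟩
    _ = C * Δ := mul_comm _ _
  have hvinv : ∀ k : ℕ, ((v k)⁻¹ : 𝔸ˣ) = (exp (-(Δ • X ((k:ℝ) * Δ))) : 𝔸) := by
    intro k
    exact Units.inv_eq_of_mul_eq_one_right (by rw [(hv k).2, my_exp_mul_exp_neg])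
  have hvinvnorm : ∀ k : ℕ, k < N → ‖(((v k)⁻¹ : 𝔸ˣ) : 𝔸)‖ ≤ Real.exp (C * Δ) := by
    intro k hk
    rw [hvinv k]
    refine (my_norm_exp_le _).trans (Real.exp_le_exp.2 ?_)
    rw [norm_neg, norm_smul, Real.norm_eq_abs, abs_of_nonneg hΔ0]
    calc Δ * ‖X ((k:ℝ) * Δ)‖ ≤ Δ * C := by
          gcongr
          exact hCX _ ⟨by positivity, hkΔs k hk.le⟩
    _ = C * Δ := mul_comm _ _
  -- norm bounds on u
  have hunorm : ∀ k : ℕ, k ≤ N → ‖(u k : 𝔸)‖ ≤ Real.exp (C * ((k:ℝ) * Δ)) := by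
    intro k hk
    induction k with
    | zero => rw [hu0]; simp
    | succ k ih =>
      rw [huS k, Units.val_mul]
      calc ‖(v k : 𝔸) * (u k : 𝔸)‖ ≤ ‖(v k : 𝔸)‖ * ‖(u k : 𝔸)‖ := norm_mul_le _ _
      _ ≤ Real.exp (C * Δ) * Real.exp (C * ((k:ℝ) * Δ)) :=
          mul_le_mul (hvnorm k (lt_of_lt_of_le (Nat.lt_succ_self k) hk))
            (ih (le_trans (Nat.le_succ k) hk)) (norm_nonneg _) (Real.exp_nonneg _)
      _ = Real.exp (C * (((k + 1 : ℕ):ℝ) * Δ)) := by rw [← Real.exp_add]; push_cast; ring_nf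
  have huinvnorm : ∀ k : ℕ, k ≤ N → ‖(((u k)⁻¹ : 𝔸ˣ) : 𝔸)‖ ≤ Real.exp (C * ((k:ℝ) * Δ)) := by
    intro k hk
    induction k with
    | zero => rw [hu0]; simp
    | succ k ih =>
      have h2 : (u (k+1))⁻¹ = (u k)⁻¹ * (v k)⁻¹ := by rw [huS k, mul_inv_rev]
      rw [h2, Units.val_mul]
      calc ‖(((u k)⁻¹ : 𝔸ˣ) : 𝔸) * (((v k)⁻¹ : 𝔸ˣ) : 𝔸)‖
          ≤ ‖(((u k)⁻¹ : 𝔸ˣ) : 𝔸)‖ * ‖(((v k)⁻¹ : 𝔸ˣ) : 𝔸)‖ := norm_mul_le _ _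
      _ ≤ Real.exp (C * ((k:ℝ) * Δ)) * Real.exp (C * Δ) :=
          mul_le_mul (ih (le_trans (Nat.le_succ k) hk))
            (hvinvnorm k (lt_of_lt_of_le (Nat.lt_succ_self k) hk)) (norm_nonneg _)
            (Real.exp_nonneg _)
      _ = Real.exp (C * (((k + 1 : ℕ):ℝ) * Δ)) := by rw [← Real.exp_add]; push_cast; ring_nf
  -- main induction
  set ε2 : ℝ := ε' * Real.exp (C * s) with hε2
  have hε20 : 0 ≤ ε2 := by positivity
  have hholc : Continuous hol := continuous_iff_continuousAt.mpr fun τ => (hhol τ).continuousAt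
  have hkey : ∀ k : ℕ, k ≤ N →
      ‖hol ((k:ℝ) * Δ) - (u k : 𝔸)‖ ≤ ε2 * Δ * k * Real.exp (C * Δ * k) := by
    intro k hk
    induction k with
    | zero => simp [hu0, hhol0]
    | succ k ih =>
      have hkN : k < N := hk
      have hkN' : k ≤ N := hkN.le
      have ihk := ih hkN'
      set A : 𝔸 := X ((k:ℝ) * Δ) with hA
      have hAC : ‖A‖ ≤ C := hCX _ ⟨by positivity, hkΔs k hkN'⟩
      set e : ℝ → 𝔸 := fun τ => exp ((τ - (k:ℝ)*Δ) • A) * (u k : 𝔸) with he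
      have hederiv : ∀ τ, HasDerivAt e (A * e τ) τ := by
        intro τ
        have h1 : HasDerivAt (fun τ : ℝ => exp ((τ - (k:ℝ)*Δ) • A))
            (A * exp ((τ - (k:ℝ)*Δ) • A)) τ := by
          have hg : HasDerivAt (fun x : ℝ => x - (k:ℝ)*Δ) 1 τ := by
            simpa using (hasDerivAt_id τ).sub_const ((k:ℝ)*Δ)
          have h2 := HasDerivAt.scomp τ (hasDerivAt_exp_smul_const' (𝕂 := ℝ) A (τ - (k:ℝ)*Δ)) hg
          simpa [Function.comp_def] using h2
        have h3 := h1.mul_const (u k : 𝔸)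
        simpa [he, mul_assoc] using h3
      have hec : Continuous e :=
        (NormedSpace.exp_continuous.comp
          ((continuous_id.sub continuous_const).smul continuous_const)).mul continuous_const
      set f : ℝ → 𝔸 := fun τ => hol τ - e τ with hf
      have hfderiv : ∀ τ, HasDerivAt f (X τ * f τ + (X τ - A) * e τ) τ := by
        intro τ
        have h3 := (hhol τ).sub (hederiv τ)
        convert h3 using 1
        · rfl
        · rfl
        simp only [hf]
        noncomm_ring
      have ha : (k:ℝ) * Δ ≤ ((k:ℝ)+1) * Δ := by nlinarith
      have hk1N : ((k:ℝ)+1) ≤ (N:ℝ) := by exact_mod_cast hk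
      have hbound : ∀ τ ∈ Ico ((k:ℝ)*Δ) (((k:ℝ)+1)*Δ),
          ‖X τ * f τ + (X τ - A) * e τ‖ ≤ C * ‖f τ‖ + ε2 := by
        intro τ hτ
        obtain ⟨hτ1, hτ2⟩ := hτ
        have hτs : τ ≤ s := by
          calc τ ≤ ((k:ℝ)+1)*Δ := hτ2.le
          _ ≤ (N:ℝ)*Δ := by gcongr
          _ = s := hNΔ
        have hτ0 : 0 ≤ τ := le_trans (by positivity) hτ1
        have hτIcc : τ ∈ Icc 0 s := ⟨hτ0, hτs⟩
        have hXτ : ‖X τ‖ ≤ C := hCX τ hτIcc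
        have hXA : ‖X τ - A‖ ≤ ε' := by
          have hkIcc : (k:ℝ)*Δ ∈ Icc 0 s := ⟨by positivity, hkΔs k hkN'⟩
          have hdist : dist τ ((k:ℝ)*Δ) < δ := by
            rw [Real.dist_eq, abs_of_nonneg (by linarith)]
            have h6 : τ - (k:ℝ)*Δ < Δ := by nlinarith
            linarith
          have h7 := hδ τ hτIcc ((k:ℝ)*Δ) hkIcc hdist
          rw [dist_eq_norm] at h7; exact h7.le
        have henorm : ‖e τ‖ ≤ Real.exp (C * s) := by
          calc ‖e τ‖ ≤ ‖exp ((τ - (k:ℝ)*Δ) • A)‖ * ‖(u k : 𝔸)‖ := norm_mul_le _ _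
          _ ≤ Real.exp ((τ - (k:ℝ)*Δ) * C) * Real.exp (C * ((k:ℝ) * Δ)) := by
              refine mul_le_mul ?_ (hunorm k hkN') (norm_nonneg _) (Real.exp_nonneg _)
              refine (my_norm_exp_le _).trans (Real.exp_le_exp.2 ?_)
              rw [norm_smul, Real.norm_eq_abs, abs_of_nonneg (by linarith)]
              gcongr
          _ = Real.exp ((τ - (k:ℝ)*Δ) * C + C * ((k:ℝ)*Δ)) := by rw [← Real.exp_add]
          _ ≤ Real.exp (C * s) := by
              apply Real.exp_le_exp.2
              nlinarith
        calc ‖X τ * f τ + (X τ - A) * e τ‖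
            ≤ ‖X τ * f τ‖ + ‖(X τ - A) * e τ‖ := norm_add_le _ _
        _ ≤ ‖X τ‖ * ‖f τ‖ + ‖X τ - A‖ * ‖e τ‖ := add_le_add (norm_mul_le _ _) (norm_mul_le _ _)
        _ ≤ C * ‖f τ‖ + ε' * Real.exp (C * s) :=
            add_le_add (mul_le_mul hXτ le_rfl (norm_nonneg _) hC0.le)
              (mul_le_mul hXA henorm (norm_nonneg _) hε'0.le)
        _ = C * ‖f τ‖ + ε2 := by rw [hε2]
      have hcont : ContinuousOn f (Icc ((k:ℝ)*Δ) (((k:ℝ)+1)*Δ)) :=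
        (hholc.sub hec).continuousOn
      have hgron := norm_le_gronwallBound_of_norm_deriv_right_le hcont
        (fun x _ => (hfderiv x).hasDerivWithinAt) le_rfl hbound (((k:ℝ)+1)*Δ) ⟨ha, le_rfl⟩
      have hsub : ((k:ℝ)+1)*Δ - (k:ℝ)*Δ = Δ := by ring
      rw [hsub] at hgron
      -- bound the gronwall bound
      set E : ℝ := Real.exp (C * Δ) with hE
      have hE0 : 0 < E := Real.exp_pos _
      have hE1 : Real.exp (C*Δ) - 1 ≤ (C*Δ) * Real.exp (C*Δ) := by
        have hmul : Real.exp (-(C*Δ)) * Real.exp (C*Δ) = 1 := by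
          rw [← Real.exp_add]; simp
        nlinarith [Real.add_one_le_exp (-(C*Δ)), Real.exp_pos (C*Δ)]
      have hgb : gronwallBound ‖f ((k:ℝ)*Δ)‖ C ε2 Δ ≤ (‖f ((k:ℝ)*Δ)‖ + ε2 * Δ) * E := by
        rw [gronwallBound_of_K_ne_0 (ne_of_gt hC0)]
        have h8 : ε2 / C * (Real.exp (C*Δ) - 1) ≤ ε2 * Δ * E := by
          rw [div_mul_eq_mul_div, div_le_iff₀ hC0]
          nlinarith
        have h9 : ‖f ((k:ℝ)*Δ)‖ * Real.exp (C*Δ) = ‖f ((k:ℝ)*Δ)‖ * E := rfl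
        nlinarith
      -- identify endpoints
      have hfk : f ((k:ℝ)*Δ) = hol ((k:ℝ)*Δ) - (u k : 𝔸) := by
        simp only [hf, he]
        congr 1
        rw [sub_self, zero_smul, NormedSpace.exp_zero, one_mul]
      have hetop : e (((k:ℝ)+1) * Δ) = (u (k+1) : 𝔸) := by
        rw [huS k, Units.val_mul, (hv k).2]
        simp only [he]
        have h10 : ((k:ℝ)+1) * Δ - (k:ℝ)*Δ = Δ := by ring
        rw [h10]
      have hcast : (((k+1):ℕ):ℝ) = (k:ℝ) + 1 := by push_cast; ring
      rw [hcast]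
      have hftop : hol (((k:ℝ)+1) * Δ) - (u (k+1) : 𝔸) = f (((k:ℝ)+1) * Δ) := by
        simp only [hf, hetop]
      rw [hftop]
      have hexp1 : (1:ℝ) ≤ Real.exp (C * Δ * k) :=
        Real.one_le_exp (by positivity)
      have hexpadd : Real.exp (C * Δ * ((k:ℝ)+1)) = Real.exp (C * Δ * k) * E := by
        rw [hE, ← Real.exp_add]; ring_nf
      calc ‖f (((k:ℝ)+1) * Δ)‖ ≤ (‖f ((k:ℝ)*Δ)‖ + ε2 * Δ) * E := le_trans hgron hgb
      _ ≤ (ε2 * Δ * k * Real.exp (C * Δ * k) + ε2 * Δ) * E := by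
          gcongr
          rw [hfk]; exact ihk
      _ ≤ ε2 * Δ * ((k:ℝ)+1) * Real.exp (C * Δ * ((k:ℝ)+1)) := by
          rw [hexpadd]
          have hΔe : 0 ≤ ε2 * Δ := by positivity
          have h13 : ε2 * Δ * (k:ℝ) * Real.exp (C*Δ*k) + ε2 * Δ
              ≤ ε2 * Δ * ((k:ℝ)+1) * Real.exp (C*Δ*k) := by nlinarith
          calc (ε2 * Δ * (k:ℝ) * Real.exp (C * Δ * (k:ℝ)) + ε2 * Δ) * E
              ≤ (ε2 * Δ * ((k:ℝ)+1) * Real.exp (C * Δ * (k:ℝ))) * E :=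
                mul_le_mul_of_nonneg_right h13 hE0.le
          _ = ε2 * Δ * ((k:ℝ) + 1) * (Real.exp (C * Δ * (k:ℝ)) * E) := by ring
  -- conclude
  refine ⟨u N, huG N, ?_, ?_⟩
  · have hfin := hkey N le_rfl
    have hΔN : Δ * (N:ℝ) = s := by rw [mul_comm]; exact hNΔ
    have h11 : ε2 * Δ * (N:ℝ) * Real.exp (C * Δ * N) = ε' * D := by
      calc ε2 * Δ * (N:ℝ) * Real.exp (C * Δ * N)
          = ε2 * (Δ * N) * Real.exp (C * (Δ * N)) := by ring_nf
      _ = ε2 * s * Real.exp (C * s) := by rw [hΔN]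
      _ = ε' * D := by rw [hε2, hD]; ring
    have h12 : ε' * D ≤ ε := by
      rw [hε'def, div_mul_eq_mul_div, div_le_iff₀ (by positivity)]
      nlinarith
    rw [norm_sub_rev]
    calc ‖hol s - (u N : 𝔸)‖ = ‖hol ((N:ℝ)*Δ) - (u N : 𝔸)‖ := by rw [hNΔ]
    _ ≤ ε2 * Δ * N * Real.exp (C * Δ * N) := hfin
    _ = ε' * D := h11
    _ ≤ ε := h12
  · have := huinvnorm N le_rfl
    rwa [hNΔ] at this

lemma holonomy_nonneg [ProperSpace 𝔸] (G : Subgroup 𝔸ˣ) (hGclosed : IsClosed (G : Set 𝔸ˣ))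
    (X : ℝ → 𝔸) (hX : Continuous X)
    (hmem : ∀ a t : ℝ, ∃ u : 𝔸ˣ, u ∈ G ∧ (u : 𝔸) = exp (t • X a))
    (hol : ℝ → 𝔸) (hhol : ∀ a, HasDerivAt hol (X a * hol a) a) (hhol0 : hol 0 = 1)
    {s : ℝ} (hs : 0 ≤ s) :
    ∃ u : 𝔸ˣ, u ∈ G ∧ (u : 𝔸) = hol s := by
  obtain ⟨C0, hC0⟩ :=
    (isCompact_Icc (a := (0:ℝ)) (b := s)).exists_bound_of_continuousOn hX.continuousOn
  set C := max C0 1 with hC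
  have hC1 : 1 ≤ C := le_max_right _ _
  have hCX : ∀ a ∈ Icc (0:ℝ) s, ‖X a‖ ≤ C := fun a ha => (hC0 a ha).trans (le_max_left _ _)
  have happrox : ∀ m : ℕ, ∃ u : 𝔸ˣ, u ∈ G ∧ ‖(u:𝔸) - hol s‖ ≤ 1/(m+1) ∧
      ‖((u⁻¹:𝔸ˣ):𝔸)‖ ≤ Real.exp (C*s) :=
    fun m => key_approx G X hX hmem hol hhol hhol0 hs hC1 hCX (by positivity)
  choose w hwG hw1 hw2 using happrox
  have h1 : Filter.Tendsto (fun m => (w m : 𝔸)) Filter.atTop (nhds (hol s)) := by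
    rw [tendsto_iff_dist_tendsto_zero]
    refine squeeze_zero (fun m => dist_nonneg) (fun m => ?_)
      tendsto_one_div_add_atTop_nhds_zero_nat
    rw [dist_eq_norm]; exact hw1 m
  have hball : ∀ m, (((w m)⁻¹ : 𝔸ˣ) : 𝔸) ∈ Metric.closedBall (0:𝔸) (Real.exp (C*s)) := by
    intro m; rw [mem_closedBall_zero_iff]; exact hw2 m
  obtain ⟨B, -, phi, hphi, hlim⟩ := tendsto_subseq_of_bounded Metric.isBounded_closedBall hball
  have h1' : Filter.Tendsto (fun j => (w (phi j) : 𝔸)) Filter.atTop (nhds (hol s)) :=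
    h1.comp hphi.tendsto_atTop
  have hBl : B * hol s = 1 := by
    have ht : Filter.Tendsto (fun j => (((w (phi j))⁻¹ : 𝔸ˣ) : 𝔸) * (w (phi j) : 𝔸))
        Filter.atTop (nhds (B * hol s)) := hlim.mul h1'
    have ht2 : ∀ j, (((w (phi j))⁻¹ : 𝔸ˣ) : 𝔸) * (w (phi j) : 𝔸) = 1 := fun j => Units.inv_mul _
    simp only [ht2] at ht
    exact tendsto_nhds_unique ht tendsto_const_nhds
  have hBr : hol s * B = 1 := by
    have ht : Filter.Tendsto (fun j => (w (phi j) : 𝔸) * (((w (phi j))⁻¹ : 𝔸ˣ) : 𝔸))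
        Filter.atTop (nhds (hol s * B)) := h1'.mul hlim
    have ht2 : ∀ j, (w (phi j) : 𝔸) * (((w (phi j))⁻¹ : 𝔸ˣ) : 𝔸) = 1 := fun j => Units.mul_inv _
    simp only [ht2] at ht
    exact tendsto_nhds_unique ht tendsto_const_nhds
  refine ⟨⟨hol s, B, hBr, hBl⟩, ?_, rfl⟩
  have hWt : Filter.Tendsto (fun j => w (phi j)) Filter.atTop
      (nhds (⟨hol s, B, hBr, hBl⟩ : 𝔸ˣ)) := by
    rw [Units.isInducing_embedProduct.tendsto_nhds_iff]
    have hcomp : Filter.Tendsto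
        (fun j => ((w (phi j) : 𝔸), MulOpposite.op (((w (phi j))⁻¹ : 𝔸ˣ) : 𝔸)))
        Filter.atTop (nhds ((hol s), MulOpposite.op B)) :=
      h1'.prodMk_nhds ((MulOpposite.continuous_op.tendsto B).comp hlim)
    exact hcomp
  exact hGclosed.mem_of_tendsto hWt (Filter.Eventually.of_forall fun j => hwG (phi j))

lemma holonomy_full [ProperSpace 𝔸] (G : Subgroup 𝔸ˣ) (hGclosed : IsClosed (G : Set 𝔸ˣ))
    (X : ℝ → 𝔸) (hX : Continuous X)
    (hmem : ∀ a t : ℝ, ∃ u : 𝔸ˣ, u ∈ G ∧ (u : 𝔸) = exp (t • X a))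
    (hol : ℝ → 𝔸) (hhol : ∀ a, HasDerivAt hol (X a * hol a) a) (hhol0 : hol 0 = 1)
    (s : ℝ) : ∃ u : 𝔸ˣ, u ∈ G ∧ (u : 𝔸) = hol s := by
  rcases le_or_gt 0 s with hs | hs
  · exact holonomy_nonneg G hGclosed X hX hmem hol hhol hhol0 hs
  · set Y : ℝ → 𝔸 := fun t => -X (-t) with hY
    have hYc : Continuous Y := (hX.comp continuous_neg).neg
    set h : ℝ → 𝔸 := fun t => hol (-t) with hh
    have hmem' : ∀ a t : ℝ, ∃ u : 𝔸ˣ, u ∈ G ∧ (u : 𝔸) = exp (t • Y a) := by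
      intro a t
      obtain ⟨u, huG, hu⟩ := hmem (-a) (-t)
      refine ⟨u, huG, ?_⟩
      rw [hu]
      congr 1
      rw [hY]
      simp [smul_neg, neg_smul]
    have hder : ∀ a, HasDerivAt h (Y a * h a) a := by
      intro a
      have h0 := HasDerivAt.scomp a (hhol (-a)) (hasDerivAt_neg a)
      convert h0 using 1
      · rfl
      · rfl
      simp [hY, hh, neg_mul]
    have h0 : h 0 = 1 := by simp [hh, hhol0]
    obtain ⟨u, huG, hu⟩ :=
      holonomy_nonneg G hGclosed Y hYc hmem' h hder h0 (s := -s) (by linarith)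
    exact ⟨u, huG, by simpa [hh] using hu⟩

end Aux


attribute [local instance] Matrix.linftyOpNormedAddCommGroup Matrix.linftyOpNormedRing
  Matrix.linftyOpNormedAlgebra

/-- Let `G` be a closed subgroup of `GL(n,ℝ)` with Lie algebra
`𝔤 = {A : exp(tA) ∈ G for all t}`.  If `X : ℝ → M_n(ℝ)` is continuous with values in `𝔤`,
then the holonomy of `X` (the solution of `∂ₛ hol = X·hol`, `hol 0 = 1`) stays in `G`. -/
theorem holonomy_stays_in_closed_subgroup
    (n : ℕ) (G : Subgroup (Matrix (Fin n) (Fin n) ℝ)ˣ)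
    (hGclosed : IsClosed (G : Set (Matrix (Fin n) (Fin n) ℝ)ˣ))
    (X : ℝ → Matrix (Fin n) (Fin n) ℝ) (hX : Continuous X)
    (hmem : ∀ s, X s ∈ {A : Matrix (Fin n) (Fin n) ℝ |
      ∀ t : ℝ, ∃ u : (Matrix (Fin n) (Fin n) ℝ)ˣ, u ∈ G ∧ (u : Matrix (Fin n) (Fin n) ℝ)
        = NormedSpace.exp (t • A)})
    (hol : ℝ → Matrix (Fin n) (Fin n) ℝ)
    (hhol : ∀ s, HasDerivAt hol (X s * hol s) s) (hhol0 : hol 0 = 1) :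
    ∀ s : ℝ, ∃ u : (Matrix (Fin n) (Fin n) ℝ)ˣ, u ∈ G ∧
      (u : Matrix (Fin n) (Fin n) ℝ) = hol s := by
  intro s
  rcases Nat.eq_zero_or_pos n with hn | hn
  · subst hn
    haveI : Subsingleton (Matrix (Fin 0) (Fin 0) ℝ) :=
      ⟨fun a b => Matrix.ext fun i _ => i.elim0⟩
    exact ⟨1, G.one_mem, Subsingleton.elim _ _⟩
  · haveI : Nonempty (Fin n) := ⟨⟨0, hn⟩⟩
    haveI : CompleteSpace (Matrix (Fin n) (Fin n) ℝ) := FiniteDimensional.complete ℝ _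
    haveI : ProperSpace (Matrix (Fin n) (Fin n) ℝ) := FiniteDimensional.proper ℝ _
    exact holonomy_full G hGclosed X hX (fun a t => hmem a t) hol hhol hhol0 s
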